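/- Let Ω be an open properly convex domain in RP^n with Hilbert metric d_Ω. If ℓ is a projective line meeting Ω in a proper segment α = (a_-, a_+) with endpoints in Fr(Ω), H_± are supporting hyperplanes to Ω at a_±, P = H_+ ∩ H_-, and π : Ω → α is projection along P onto α, then d_Ω(x, y) ≥ d_Ω(π x, π y) for all x, y ∈ Ω. -/

import Mathlib

open Pointwise

/-- A cone in `ℝ^{n+1}`: invariant under positive scaling. -/
def IsCone {n : ℕ} (C : Set (Fin (n+1) → ℝ)) : Prop :=
  ∀ t : ℝ, 0 < t → t • C = C

/-- Sharpness: the closure contains no pair of antipodal nonzero vectors, i.e. the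
projectivized domain is properly convex. -/
def IsSharp {n : ℕ} (C : Set (Fin (n+1) → ℝ)) : Prop :=
  ∀ v : Fin (n+1) → ℝ, v ≠ 0 → v ∈ closure C → -v ∉ closure C

/-- The Hilbert distance between the rays of `x` and `y` in the projectivized cone `C`
equals `d`.  Either the rays coincide and `d = 0`, or there are boundary rays `a, b`
(endpoints of the chord) with `x = αa+βb`, `y = γa+δb` (all coefficients positive), and
`d = (1/2)|log((βγ)/(αδ))|` (the cross-ratio formula for the Hilbert metric). -/
def HilbertDistEq {n : ℕ} (C : Set (Fin (n+1) → ℝ)) (x y : Fin (n+1) → ℝ) (d : ℝ) : Prop :=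
  ((∃ t : ℝ, 0 < t ∧ y = t • x) ∧ d = 0) ∨
  (∃ a b : Fin (n+1) → ℝ, a ∈ frontier C ∧ b ∈ frontier C ∧
    ∃ α β γ δ : ℝ, 0 < α ∧ 0 < β ∧ 0 < γ ∧ 0 < δ ∧
      x = α • a + β • b ∧ y = γ • a + δ • b ∧
      d = |Real.log ((β * γ) / (α * δ))| / 2)

/-- Cross-ratio comparison: expressing points in terms of an "outer" pair of rays
(nonnegative recombination) can only decrease the cross-ratio distance. -/
lemma crossratio_key (α β γ δ e f g h : ℝ) (hα : 0 < α) (hβ : 0 < β) (hγ : 0 < γ) (hδ : 0 < δ)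
    (he : 0 ≤ e) (hf : 0 ≤ f) (hg : 0 ≤ g) (hh : 0 ≤ h)
    (hA : 0 < α*e+β*g) (hB : 0 < α*f+β*h) (hG : 0 < γ*e+δ*g) (hD : 0 < γ*f+δ*h) :
    |Real.log ((α*f+β*h) * (γ*e+δ*g) / ((α*e+β*g) * (γ*f+δ*h)))| ≤
      |Real.log ((β*γ) / (α*δ))| := by
  have hαδ : 0 < α*δ := by positivity
  have hβγ : 0 < β*γ := by positivity
  set t : ℝ := β*γ/(α*δ) with htdef
  have ht0 : 0 < t := by positivity
  have hti : t⁻¹ = α*δ/(β*γ) := by rw [htdef, inv_div]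
  have htt : t * t⁻¹ = 1 := mul_inv_cancel₀ ht0.ne'
  have hti0 : 0 < t⁻¹ := inv_pos.2 ht0
  set M := max t t⁻¹ with hM
  set m := min t t⁻¹ with hm
  have hM1 : 1 ≤ M := by
    rcases le_total 1 t with h' | h'
    · exact le_trans h' (le_max_left _ _)
    · exact le_trans (one_le_inv_iff₀.mpr ⟨ht0, h'⟩) (le_max_right _ _)
  have hm1 : m ≤ 1 := by
    rcases le_total t 1 with h' | h'
    · exact le_trans (min_le_left _ _) h'
    · exact le_trans (min_le_right _ _) (inv_le_one_of_one_le₀ h')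
  have hMt : β*γ ≤ M*(α*δ) := by
    have h' : t ≤ M := le_max_left _ _
    rw [htdef] at h'
    exact (div_le_iff₀ hαδ).mp h'
  have hMt' : α*δ ≤ M*(β*γ) := by
    have h' : t⁻¹ ≤ M := le_max_right _ _
    rw [hti] at h'
    exact (div_le_iff₀ hβγ).mp h'
  have hmt : m*(α*δ) ≤ β*γ := by
    have h' : m ≤ t := min_le_left _ _
    rw [htdef] at h'
    exact (le_div_iff₀ hαδ).mp h'
  have hmt' : m*(β*γ) ≤ α*δ := by
    have h' : m ≤ t⁻¹ := min_le_right _ _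
    rw [hti] at h'
    exact (le_div_iff₀ hβγ).mp h'
  have hm0 : 0 < m := lt_min ht0 hti0
  have T1 : 0 ≤ (M-1)*(α*γ*(e*f)) := mul_nonneg (by linarith) (by positivity)
  have T2 : 0 ≤ (M-1)*(β*δ*(g*h)) := mul_nonneg (by linarith) (by positivity)
  have T3 : 0 ≤ (M*(α*δ)-β*γ)*(e*h) := mul_nonneg (by linarith) (mul_nonneg he hh)
  have T4 : 0 ≤ (M*(β*γ)-α*δ)*(f*g) := mul_nonneg (by linarith) (mul_nonneg hf hg)
  have hNM : (α*f+β*h)*(γ*e+δ*g) ≤ M*((α*e+β*g)*(γ*f+δ*h)) := by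
    have hid : M*((α*e+β*g)*(γ*f+δ*h)) - (α*f+β*h)*(γ*e+δ*g) =
        (M-1)*(α*γ*(e*f)) + (M-1)*(β*δ*(g*h)) + (M*(α*δ)-β*γ)*(e*h) + (M*(β*γ)-α*δ)*(f*g) := by
      ring
    linarith [T1, T2, T3, T4]
  have S1 : 0 ≤ (1-m)*(α*γ*(e*f)) := mul_nonneg (by linarith) (by positivity)
  have S2 : 0 ≤ (1-m)*(β*δ*(g*h)) := mul_nonneg (by linarith) (by positivity)
  have S3 : 0 ≤ (β*γ - m*(α*δ))*(e*h) := mul_nonneg (by linarith) (mul_nonneg he hh)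
  have S4 : 0 ≤ (α*δ - m*(β*γ))*(f*g) := mul_nonneg (by linarith) (mul_nonneg hf hg)
  have hmN : m*((α*e+β*g)*(γ*f+δ*h)) ≤ (α*f+β*h)*(γ*e+δ*g) := by
    have hid : (α*f+β*h)*(γ*e+δ*g) - m*((α*e+β*g)*(γ*f+δ*h)) =
        (1-m)*(α*γ*(e*f)) + (1-m)*(β*δ*(g*h)) + (β*γ - m*(α*δ))*(e*h) + (α*δ - m*(β*γ))*(f*g) := by
      ring
    linarith [S1, S2, S3, S4]
  have hDpos : 0 < (α*e+β*g)*(γ*f+δ*h) := by positivity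
  have hspos : 0 < (α*f+β*h)*(γ*e+δ*g)/((α*e+β*g)*(γ*f+δ*h)) := by positivity
  have hsM : (α*f+β*h)*(γ*e+δ*g)/((α*e+β*g)*(γ*f+δ*h)) ≤ M := (div_le_iff₀ hDpos).mpr hNM
  have hsm : m ≤ (α*f+β*h)*(γ*e+δ*g)/((α*e+β*g)*(γ*f+δ*h)) := (le_div_iff₀ hDpos).mpr hmN
  have hlog1 := Real.log_le_log hspos hsM
  have hlog2 := Real.log_le_log hm0 hsm
  rcases le_total 1 t with h' | h'
  · have hit : t⁻¹ ≤ t := le_trans (inv_le_one_of_one_le₀ h') h'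
    have hMe : M = t := max_eq_left hit
    have hme : m = t⁻¹ := min_eq_right hit
    have hlogt : 0 ≤ Real.log t := Real.log_nonneg h'
    rw [htdef] at hMe hme hlogt ⊢
    rw [abs_of_nonneg hlogt, abs_le]
    constructor
    · rw [hme, Real.log_inv] at hlog2; linarith
    · rw [hMe] at hlog1; linarith
  · have hit : t ≤ t⁻¹ := le_trans h' (one_le_inv_iff₀.mpr ⟨ht0, h'⟩)
    have hMe : M = t⁻¹ := max_eq_right hit
    have hme : m = t := min_eq_left hit
    have hlogt : Real.log t ≤ 0 := Real.log_nonpos ht0.le h'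
    rw [htdef] at hMe hme hlogt ⊢
    rw [abs_of_nonpos hlogt, abs_le]
    constructor
    · rw [hme] at hlog2; linarith
    · rw [hMe, Real.log_inv] at hlog1; linarith
/-- **Projection decreases the Hilbert metric.** Let `Ω = P(C)` be an open properly convex
domain, `α = (a,b)` a proper open chord of `Ω` with supporting hyperplanes `ker φ` at `a`
and `ker ψ` at `b`, and let `π` be projection along `P = ker φ ∩ ker ψ` onto the chord,
given by `π x = (ψx/ψa)·a + (φx/φb)·b`.  Then `d_Ω(πx, πy) ≤ d_Ω(x, y)`. -/
theorem projection_decreases_hilbert (n : ℕ) (C : Set (Fin (n+1) → ℝ))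
    (hCo : IsOpen C) (hCc : IsCone C) (hconv : Convex ℝ C) (hsharp : IsSharp C)
    (hne : C.Nonempty)
    (a b : Fin (n+1) → ℝ) (ha : a ∈ frontier C) (hb : b ∈ frontier C)
    (hchord : ∀ α β : ℝ, 0 < α → 0 < β → α • a + β • b ∈ C)
    (φ ψ : (Fin (n+1) → ℝ) →ₗ[ℝ] ℝ)
    (hφa : φ a = 0) (hφpos : ∀ x ∈ C, 0 < φ x)
    (hψb : ψ b = 0) (hψpos : ∀ x ∈ C, 0 < ψ x)
    (hφb : φ b ≠ 0) (hψa : ψ a ≠ 0)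
    (x y : Fin (n+1) → ℝ) (hx : x ∈ C) (hy : y ∈ C)
    (d₁ d₂ : ℝ)
    (h1 : HilbertDistEq C x y d₁)
    (h2 : HilbertDistEq C ((ψ x / ψ a) • a + (φ x / φ b) • b)
                         ((ψ y / ψ a) • a + (φ y / φ b) • b) d₂) :
    d₂ ≤ d₁ := by
  classical
  -- basic cone facts
  have hfrnC : ∀ w : Fin (n+1) → ℝ, w ∈ frontier C → w ∉ C := by
    intro w hw hwC
    rw [hCo.frontier_eq] at hw
    exact hw.2 hwC
  have hCsm : ∀ t : ℝ, 0 < t → ∀ w ∈ C, t • w ∈ C := by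
    intro t ht w hw
    rw [← hCc t ht]
    exact Set.smul_mem_smul_set hw
  have h0cl : (0 : Fin (n+1) → ℝ) ∈ closure C := by
    obtain ⟨c, hc⟩ := hne
    refine mem_closure_of_tendsto (f := fun k : ℕ => ((k : ℝ))⁻¹ • c)
      (by simpa using (tendsto_inv_atTop_nhds_zero_nat (𝕜 := ℝ)).smul_const c) ?_
    refine Filter.eventually_atTop.2 ⟨1, fun k hk => ?_⟩
    exact hCsm _ (inv_pos.2 (by exact_mod_cast Nat.lt_of_lt_of_le Nat.zero_lt_one hk)) c hc
  have hclsm : ∀ t : ℝ, 0 ≤ t → ∀ w ∈ closure C, t • w ∈ closure C := by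
    intro t ht w hw
    rcases eq_or_lt_of_le ht with h | h
    · rw [← h, zero_smul]; exact h0cl
    · exact map_mem_closure (continuous_const_smul t) hw
        (fun z hz => by rw [← hCc t h]; exact Set.smul_mem_smul_set hz)
  have hcladd : ∀ w z : Fin (n+1) → ℝ, w ∈ closure C → z ∈ closure C → w + z ∈ closure C := by
    intro w z hw hz
    have h2' : (2:ℝ) • ((1/2 : ℝ) • w + (1/2 : ℝ) • z) = w + z := by module
    rw [← h2']
    exact hclsm 2 (by norm_num) _
      (hconv.closure hw hz (by norm_num) (by norm_num) (by norm_num))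
  have haddC : ∀ w z : Fin (n+1) → ℝ, w ∈ C → z ∈ closure C → w + z ∈ C := by
    intro w z hw hz
    have h2' : (2:ℝ) • ((1/2 : ℝ) • w + (1/2 : ℝ) • z) = w + z := by module
    rw [← h2']
    refine hCsm 2 (by norm_num) _ ?_
    have h3 : (1/2 : ℝ) • w + (1/2 : ℝ) • z ∈ interior C :=
      hconv.combo_interior_closure_mem_interior (by rw [hCo.interior_eq]; exact hw) hz
        (by norm_num) (by norm_num) (by norm_num)
    rwa [hCo.interior_eq] at h3
  have h0C : (0 : Fin (n+1) → ℝ) ∉ C := by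
    intro h0
    obtain ⟨ε, hε, hball⟩ := Metric.isOpen_iff.mp hCo 0 h0
    set v : Fin (n+1) → ℝ := fun _ => ε/2 with hv
    have hnorm : ‖v‖ ≤ ε/2 := le_trans (pi_norm_const_le (ε/2)) (by rw [Real.norm_eq_abs, abs_of_nonneg (by linarith)])
    have hvmem : v ∈ C := hball (by rw [Metric.mem_ball, dist_zero_right]; linarith)
    have hnvmem : -v ∈ C := hball (by rw [Metric.mem_ball, dist_zero_right, norm_neg]; linarith)
    have hvne : v ≠ 0 := by
      intro h
      have := congrFun h 0
      simp only [hv, Pi.zero_apply] at this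
      linarith
    exact hsharp v hvne (subset_closure hvmem) (subset_closure hnvmem)
  have hψnn : ∀ w ∈ closure C, 0 ≤ ψ w := by
    intro w hw
    exact closure_minimal (fun z hz => (hψpos z hz).le)
      (isClosed_le continuous_const ψ.continuous_of_finiteDimensional) hw
  have hφnn : ∀ w ∈ closure C, 0 ≤ φ w := by
    intro w hw
    exact closure_minimal (fun z hz => (hφpos z hz).le)
      (isClosed_le continuous_const φ.continuous_of_finiteDimensional) hw
  have hψa0 : 0 < ψ a := (hψnn a (frontier_subset_closure ha)).lt_of_ne (Ne.symm hψa)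
  have hφb0 : 0 < φ b := (hφnn b (frontier_subset_closure hb)).lt_of_ne (Ne.symm hφb)
  -- independence of boundary pairs carrying an interior point
  have indep : ∀ (a₂ b₂ z : Fin (n+1) → ℝ) (α₂ β₂ : ℝ),
      a₂ ∈ frontier C → b₂ ∈ frontier C → z ∈ C → 0 < α₂ → 0 < β₂ →
      z = α₂ • a₂ + β₂ • b₂ → ∀ s t : ℝ, s • a₂ + t • b₂ = 0 → s = 0 ∧ t = 0 := by
    intro a₂ b₂ z α₂ β₂ ha₂ hb₂ hz hα₂ hβ₂ hzeq s t hst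
    have hs : s = 0 := by
      by_contra hs
      have ha₂eq : a₂ = (-(t/s)) • b₂ := by
        have h2' : s⁻¹ • (s • a₂ + t • b₂) = (0 : Fin (n+1) → ℝ) := by rw [hst, smul_zero]
        rw [smul_add, smul_smul, smul_smul, inv_mul_cancel₀ hs, one_smul] at h2'
        have h3' := eq_neg_of_add_eq_zero_left h2'
        rw [h3']
        match_scalars
        ring
      have hz2 : z = (β₂ - α₂*(t/s)) • b₂ := by rw [hzeq, ha₂eq]; module
      have hb₂ne : b₂ ≠ 0 := by
        intro h0
        rw [h0, smul_zero] at hz2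
        exact h0C (hz2 ▸ hz)
      rcases lt_trichotomy (β₂ - α₂*(t/s)) 0 with hc | hc | hc
      · have hcne : (β₂ - α₂*(t/s)) ≠ 0 := hc.ne
        have hnb : -b₂ = (-(β₂ - α₂*(t/s))⁻¹) • z := by
          rw [hz2, smul_smul, show -(β₂ - α₂*(t/s))⁻¹ * (β₂ - α₂*(t/s)) = -1 by
            rw [neg_mul, inv_mul_cancel₀ hcne]]
          module
        have hmem : -b₂ ∈ closure C := by
          rw [hnb]
          exact subset_closure (hCsm _ (neg_pos.mpr (inv_lt_zero.mpr hc)) z hz)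
        exact hsharp b₂ hb₂ne (frontier_subset_closure hb₂) hmem
      · rw [hc, zero_smul] at hz2
        exact h0C (hz2 ▸ hz)
      · have hmem : b₂ ∈ C := by
          have h3' := hCsm _ (inv_pos.2 hc) z hz
          rwa [hz2, smul_smul, inv_mul_cancel₀ hc.ne', one_smul] at h3'
        exact hfrnC b₂ hb₂ hmem
    have ht : t = 0 := by
      by_contra ht
      rw [hs, zero_smul, zero_add] at hst
      rcases smul_eq_zero.mp hst with h | h
      · exact ht h
      · rw [h, smul_zero, add_zero] at hzeq
        have hmem : a₂ ∈ C := by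
          have h3' := hCsm _ (inv_pos.2 hα₂) z hz
          rwa [hzeq, smul_smul, inv_mul_cancel₀ hα₂.ne', one_smul] at h3'
        exact hfrnC a₂ ha₂ hmem
    exact ⟨hs, ht⟩
  -- extremality of frontier rays
  have extremal : ∀ (a₂ b₂ z w : Fin (n+1) → ℝ) (α₂ β₂ e₀ f₀ : ℝ),
      a₂ ∈ frontier C → b₂ ∈ frontier C → z ∈ C → w ∈ closure C →
      0 < α₂ → 0 < β₂ → z = α₂ • a₂ + β₂ • b₂ → w = e₀ • a₂ + f₀ • b₂ →
      (∀ s t : ℝ, s • a₂ + t • b₂ = 0 → s = 0 ∧ t = 0) → 0 ≤ f₀ := by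
    intro a₂ b₂ z w α₂ β₂ e₀ f₀ ha₂ hb₂ hz hw hα₂ hβ₂ hzeq hweq hind
    by_contra hf
    push_neg at hf
    rcases le_or_gt e₀ 0 with he | he
    · have hwne : w ≠ 0 := by
        intro h0
        have := (hind e₀ f₀ (by rw [← hweq, h0])).2
        linarith
      have hnw : -w = (-e₀) • a₂ + (-f₀) • b₂ := by rw [hweq]; module
      have hnwcl : -w ∈ closure C := by
        rw [hnw]
        exact hcladd _ _ (hclsm _ (by linarith) _ (frontier_subset_closure ha₂))
          (hclsm _ (by linarith) _ (frontier_subset_closure hb₂))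
      exact hsharp w hwne hw hnwcl
    · have hf0 : f₀ ≠ 0 := hf.ne
      set μ := β₂ / (-f₀) with hμ
      have hμpos : 0 < μ := div_pos hβ₂ (by linarith)
      have hμf : β₂ + μ * f₀ = 0 := by
        rw [hμ, div_mul_eq_mul_div, div_neg, mul_div_assoc, div_self hf0, mul_one]
        ring
      have hcomb : z + μ • w = (α₂ + μ * e₀) • a₂ := by
        rw [hzeq, hweq]
        match_scalars
        · ring
        · linear_combination hμf
      have hmem : (α₂ + μ * e₀) • a₂ ∈ C := by
        rw [← hcomb]
        exact haddC _ _ hz (hclsm μ hμpos.le _ hw)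
      have hk : 0 < α₂ + μ * e₀ := by positivity
      have ha₂C : a₂ ∈ C := by
        have h2' := hCsm _ (inv_pos.2 hk) _ hmem
        rwa [smul_smul, inv_mul_cancel₀ hk.ne', one_smul] at h2'
      exact hfrnC a₂ ha₂ ha₂C
  -- the projected points
  set xh : Fin (n+1) → ℝ := (ψ x / ψ a) • a + (φ x / φ b) • b with hxh_def
  set yh : Fin (n+1) → ℝ := (ψ y / ψ a) • a + (φ y / φ b) • b with hyh_def
  have hxhC : xh ∈ C := hchord _ _ (div_pos (hψpos x hx) hψa0) (div_pos (hφpos x hx) hφb0)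
  rcases h2 with ⟨_, hd2⟩ | ⟨a'', b'', ha'', hb'', α', β', γ', δ', hα', hβ', hγ', hδ', hx2, hy2, hd2⟩
  · -- projected points proportional: d₂ = 0
    rw [hd2]
    rcases h1 with ⟨_, hd1⟩ | ⟨a', b', _, _, α, β, γ, δ, _, _, _, _, _, _, hd1⟩
    · rw [hd1]
    · rw [hd1]; positivity
  · have hind2 : ∀ s t : ℝ, s • a'' + t • b'' = 0 → s = 0 ∧ t = 0 :=
      indep a'' b'' xh α' β' ha'' hb'' hxhC hα' hβ' hx2
    rcases h1 with ⟨⟨t, ht, hyx⟩, hd1⟩ | ⟨a', b', ha', hb', α, β, γ, δ, hα, hβ, hγ, hδ, hx1, hy1, hd1⟩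
    · -- x, y proportional
      have hψy : ψ y = t * ψ x := by rw [hyx, map_smul, smul_eq_mul]
      have hφy : φ y = t * φ x := by rw [hyx, map_smul, smul_eq_mul]
      have hyh : yh = t • xh := by
        rw [hyh_def, hxh_def, hψy, hφy]
        match_scalars <;> ring
      have hzero : (t*α'-γ') • a'' + (t*β'-δ') • b'' = 0 := by
        rw [show (t*α'-γ') • a'' + (t*β'-δ') • b''
            = t • (α' • a'' + β' • b'') - (γ' • a'' + δ' • b'') from by module,
          ← hx2, ← hy2, ← hyh]
        exact sub_self yh
      obtain ⟨hA, hB⟩ := hind2 _ _ hzero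
      have hr1 : (β'*γ')/(α'*δ') = 1 := by
        rw [show γ' = t*α' from by linarith, show δ' = t*β' from by linarith]
        field_simp
      rw [hd2, hr1, hd1]
      simp [Real.log_one]
    · -- main case
      rcases eq_or_ne (α'*δ') (β'*γ') with hE | hE
      · have hr1 : (β'*γ')/(α'*δ') = 1 := by rw [← hE]; exact div_self (by positivity)
        rw [hd2, hr1, hd1]
        simp only [Real.log_one, abs_zero, zero_div]
        positivity
      · have hΔ' : α'*δ' - β'*γ' ≠ 0 := sub_ne_zero.2 hE
        have hacl'' := frontier_subset_closure ha''
        have hbcl'' := frontier_subset_closure hb''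
        have hacl' := frontier_subset_closure ha'
        have hbcl' := frontier_subset_closure hb'
        -- coordinates of a'' and b''
        have h5a : (α'*δ' - β'*γ') • a'' = δ' • xh - β' • yh := by
          rw [hx2, hy2]; module
        have h5b : (α'*δ' - β'*γ') • b'' = α' • yh - γ' • xh := by
          rw [hx2, hy2]; module
        obtain ⟨p₂, q₂, ha2⟩ : ∃ p q : ℝ, a'' = p • a + q • b := by
          refine ⟨(δ'*(ψ x/ψ a) - β'*(ψ y/ψ a))/(α'*δ'-β'*γ'),
            (δ'*(φ x/φ b) - β'*(φ y/φ b))/(α'*δ'-β'*γ'), ?_⟩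
          have h6 : a'' = (α'*δ'-β'*γ')⁻¹ • (δ' • xh - β' • yh) := by
            rw [← h5a, smul_smul, inv_mul_cancel₀ hΔ', one_smul]
          rw [h6, hxh_def, hyh_def]
          match_scalars <;> ring
        obtain ⟨r₂, s₂, hb2⟩ : ∃ p q : ℝ, b'' = p • a + q • b := by
          refine ⟨(α'*(ψ y/ψ a) - γ'*(ψ x/ψ a))/(α'*δ'-β'*γ'),
            (α'*(φ y/φ b) - γ'*(φ x/φ b))/(α'*δ'-β'*γ'), ?_⟩
          have h6 : b'' = (α'*δ'-β'*γ')⁻¹ • (α' • yh - γ' • xh) := by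
            rw [← h5b, smul_smul, inv_mul_cancel₀ hΔ', one_smul]
          rw [h6, hxh_def, hyh_def]
          match_scalars <;> ring
        -- nonnegativity of the coordinates
        have hcoord : ∀ (w : Fin (n+1) → ℝ) (p q : ℝ), w ∈ closure C → w = p • a + q • b →
            0 ≤ p ∧ 0 ≤ q := by
          intro w p q hw hweq
          have hψw := congrArg ψ hweq
          simp only [map_add, map_smul, smul_eq_mul, hψb, mul_zero, add_zero] at hψw
          have hφw := congrArg φ hweq
          simp only [map_add, map_smul, smul_eq_mul, hφa, mul_zero, zero_add] at hφw
          constructor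
          · nlinarith [hψnn w hw, hψa0]
          · nlinarith [hφnn w hw, hφb0]
        obtain ⟨hp₂, hq₂⟩ := hcoord a'' p₂ q₂ hacl'' ha2
        obtain ⟨hr₂, hs₂⟩ := hcoord b'' r₂ s₂ hbcl'' hb2
        -- the projections of a', b'
        set u : Fin (n+1) → ℝ := (ψ a'/ψ a) • a + (φ a'/φ b) • b with hu_def
        set v : Fin (n+1) → ℝ := (ψ b'/ψ a) • a + (φ b'/φ b) • b with hv_def
        have hucl : u ∈ closure C :=
          hcladd _ _ (hclsm _ (div_nonneg (hψnn a' hacl') hψa0.le) a (frontier_subset_closure ha))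
            (hclsm _ (div_nonneg (hφnn a' hacl') hφb0.le) b (frontier_subset_closure hb))
        have hvcl : v ∈ closure C :=
          hcladd _ _ (hclsm _ (div_nonneg (hψnn b' hbcl') hψa0.le) a (frontier_subset_closure ha))
            (hclsm _ (div_nonneg (hφnn b' hbcl') hφb0.le) b (frontier_subset_closure hb))
        have hψx1 : ψ x = α * ψ a' + β * ψ b' := by
          rw [hx1]; simp [map_add, map_smul, smul_eq_mul]
        have hφx1 : φ x = α * φ a' + β * φ b' := by
          rw [hx1]; simp [map_add, map_smul, smul_eq_mul]
        have hψy1 : ψ y = γ * ψ a' + δ * ψ b' := by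
          rw [hy1]; simp [map_add, map_smul, smul_eq_mul]
        have hφy1 : φ y = γ * φ a' + δ * φ b' := by
          rw [hy1]; simp [map_add, map_smul, smul_eq_mul]
        have hxuv : xh = α • u + β • v := by
          rw [hxh_def, hu_def, hv_def]
          match_scalars
          · linear_combination hψx1 * (ψ a)⁻¹
          · linear_combination hφx1 * (φ b)⁻¹
        have hyuv : yh = γ • u + δ • v := by
          rw [hyh_def, hu_def, hv_def]
          match_scalars
          · linear_combination hψy1 * (ψ a)⁻¹
          · linear_combination hφy1 * (φ b)⁻¹
        -- invertibility of the coordinate matrix of (a'', b'')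
        have hΔne : p₂*s₂ - q₂*r₂ ≠ 0 := by
          intro hΔ0
          have h7 : s₂ • a'' + (-q₂) • b'' = 0 := by
            rw [ha2, hb2]
            match_scalars
            · linear_combination hΔ0
            · ring
          have h8 : r₂ • a'' + (-p₂) • b'' = 0 := by
            rw [ha2, hb2]
            match_scalars
            · ring
            · linear_combination -hΔ0
          obtain ⟨hs2, hq2⟩ := hind2 _ _ h7
          obtain ⟨hr2, hp2⟩ := hind2 _ _ h8
          have h9 : (1:ℝ) • a'' + (0:ℝ) • b'' = 0 := by
            rw [ha2, show p₂ = 0 from by linarith, show q₂ = 0 from by linarith]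
            module
          exact one_ne_zero (hind2 1 0 h9).1
        -- decompose u, v over (a'', b'')
        have hdecomp : ∀ P Q : ℝ, ∃ ee ff : ℝ, P • a + Q • b = ee • a'' + ff • b'' := by
          intro P Q
          refine ⟨(P*s₂ - Q*r₂)/(p₂*s₂-q₂*r₂), (Q*p₂ - P*q₂)/(p₂*s₂-q₂*r₂), ?_⟩
          rw [ha2, hb2]
          match_scalars
          · linear_combination (-P) * mul_inv_cancel₀ hΔne
          · linear_combination (-Q) * mul_inv_cancel₀ hΔne
        obtain ⟨ee, ff, hue⟩ := hdecomp (ψ a'/ψ a) (φ a'/φ b)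
        obtain ⟨gg, hh, hve⟩ := hdecomp (ψ b'/ψ a) (φ b'/φ b)
        rw [← hu_def] at hue
        rw [← hv_def] at hve
        -- nonnegativity via extremality
        have hind2' : ∀ s t : ℝ, s • b'' + t • a'' = 0 → s = 0 ∧ t = 0 := by
          intro s t hst
          have h' : t • a'' + s • b'' = 0 := by rw [← hst]; module
          exact ⟨(hind2 t s h').2, (hind2 t s h').1⟩
        have hx2' : xh = β' • b'' + α' • a'' := by rw [hx2]; module
        have hff : 0 ≤ ff := extremal a'' b'' xh u α' β' ee ff ha'' hb'' hxhC hucl hα' hβ' hx2 hue hind2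
        have hee : 0 ≤ ee := extremal b'' a'' xh u β' α' ff ee hb'' ha'' hxhC hucl hβ' hα' hx2'
          (by rw [hue]; module) hind2'
        have hhh : 0 ≤ hh := extremal a'' b'' xh v α' β' gg hh ha'' hb'' hxhC hvcl hα' hβ' hx2 hve hind2
        have hgg : 0 ≤ gg := extremal b'' a'' xh v β' α' hh gg hb'' ha'' hxhC hvcl hβ' hα' hx2'
          (by rw [hve]; module) hind2'
        -- identify the coefficients
        have h9x : (α*ee+β*gg) • a'' + (α*ff+β*hh) • b'' = α' • a'' + β' • b'' := by
          rw [← hx2, hxuv, hue, hve]; module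
        have h10x : (α*ee+β*gg-α') • a'' + (α*ff+β*hh-β') • b'' = 0 := by
          rw [show (α*ee+β*gg-α') • a'' + (α*ff+β*hh-β') • b''
              = ((α*ee+β*gg) • a'' + (α*ff+β*hh) • b'') - (α' • a'' + β' • b'') from by module,
            h9x, sub_self]
        obtain ⟨hA1, hA2⟩ := hind2 _ _ h10x
        have h9y : (γ*ee+δ*gg) • a'' + (γ*ff+δ*hh) • b'' = γ' • a'' + δ' • b'' := by
          rw [← hy2, hyuv, hue, hve]; module
        have h10y : (γ*ee+δ*gg-γ') • a'' + (γ*ff+δ*hh-δ') • b'' = 0 := by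
          rw [show (γ*ee+δ*gg-γ') • a'' + (γ*ff+δ*hh-δ') • b''
              = ((γ*ee+δ*gg) • a'' + (γ*ff+δ*hh) • b'') - (γ' • a'' + δ' • b'') from by module,
            h9y, sub_self]
        obtain ⟨hB1, hB2⟩ := hind2 _ _ h10y
        -- conclude via the cross-ratio lemma
        have key := crossratio_key α β γ δ ee ff gg hh hα hβ hγ hδ hee hff hgg hhh
          (by linarith) (by linarith) (by linarith) (by linarith)
        rw [hd1, hd2, show α' = α*ee+β*gg from by linarith, show β' = α*ff+β*hh from by linarith,
          show γ' = γ*ee+δ*gg from by linarith, show δ' = γ*ff+δ*hh from by linarith]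
        linarith [key]
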